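/- Every state on the effect algebra of a finite-dimensional complex Hilbert space H (operators e with 0 ≤ e ≤ I) is of the form e ↦ tr(ρe) for a unique density operator ρ (positive semidefinite with trace 1). -/

import Mathlib

open scoped ComplexOrder

/-- Quantum effects on a `d`-dimensional complex Hilbert space: operators `e`
with `0 ≤ e ≤ I` in the Loewner order, modelled as matrices. -/
def QEffect (d : ℕ) : Type :=
  {e : Matrix (Fin d) (Fin d) ℂ // e.PosSemidef ∧ (1 - e).PosSemidef}

/-- A (convex) state on the quantum effect algebra: `[0,1]`-valued, additive
when the sum of effects is again an effect, `1` on the identity, and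
homogeneous under scalars in `[0,1]`. -/
def IsQState {d : ℕ} (ω : QEffect d → ℝ) : Prop :=
  (∀ e, ω e ∈ Set.Icc (0:ℝ) 1) ∧
  (∀ e f g : QEffect d, g.1 = e.1 + f.1 → ω g = ω e + ω f) ∧
  (∀ e : QEffect d, e.1 = 1 → ω e = 1) ∧
  (∀ (c : ℝ), c ∈ Set.Icc (0:ℝ) 1 →
    ∀ e f : QEffect d, f.1 = (c : ℂ) • e.1 → ω f = c * ω e)

namespace Busch

open Matrix

variable {d : ℕ}

local notation "Mat" => Matrix (Fin d) (Fin d) ℂ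

/-- entrywise ℓ¹ norm -/
noncomputable def N (a : Mat) : ℝ := ∑ i, ∑ j, ‖a i j‖

lemma N_nonneg (a : Mat) : 0 ≤ N a := by
  refine Finset.sum_nonneg fun i _ => Finset.sum_nonneg fun j _ => ?_
  exact norm_nonneg _

lemma N_add_le (a b : Mat) : N (a + b) ≤ N a + N b := by
  have h1 : N (a + b) ≤ ∑ i, ∑ j, (‖a i j‖ + ‖b i j‖) :=
    Finset.sum_le_sum fun i _ => Finset.sum_le_sum fun j _ => norm_add_le _ _
  have h2 : ∑ i, ∑ j, (‖a i j‖ + ‖b i j‖) = N a + N b := by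
    rw [N, N, ← Finset.sum_add_distrib]
    exact Finset.sum_congr rfl fun i _ => Finset.sum_add_distrib
  linarith

lemma abs_dot_le (a : Mat) (x : Fin d → ℂ) :
    ‖star x ⬝ᵥ a *ᵥ x‖ ≤ N a * ∑ i, Complex.normSq (x i) := by
  set S := ∑ i, Complex.normSq (x i) with hS
  have hS0 : ∀ i, Complex.normSq (x i) ≤ S := by
    intro i
    exact Finset.single_le_sum (fun j _ => Complex.normSq_nonneg (x j)) (Finset.mem_univ i)
  have key : ∀ i j, ‖x i‖ * ‖x j‖ ≤ S := by
    intro i j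
    have h1 : ‖x i‖ ^ 2 ≤ S := by rw [Complex.sq_norm]; exact hS0 i
    have h2 : ‖x j‖ ^ 2 ≤ S := by rw [Complex.sq_norm]; exact hS0 j
    nlinarith [norm_nonneg (x i), norm_nonneg (x j),
      sq_nonneg (‖x i‖ - ‖x j‖)]
  have expand : star x ⬝ᵥ a *ᵥ x = ∑ i, ∑ j, star (x i) * (a i j * x j) := by
    simp [dotProduct, mulVec, Finset.mul_sum]
  rw [expand]
  calc ‖∑ i, ∑ j, star (x i) * (a i j * x j)‖
      ≤ ∑ i, ∑ j, ‖star (x i) * (a i j * x j)‖ := by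
        refine (norm_sum_le _ _).trans ?_
        exact Finset.sum_le_sum fun i _ => norm_sum_le _ _
    _ ≤ ∑ i, ∑ j, ‖a i j‖ * S := by
        refine Finset.sum_le_sum fun i _ => Finset.sum_le_sum fun j _ => ?_
        have heq : ‖star (x i) * (a i j * x j)‖
            = ‖a i j‖ * (‖x i‖ * ‖x j‖) := by
          simp only [Complex.star_def, Complex.norm_conj, norm_mul]
          ring
        rw [heq]
        exact mul_le_mul_of_nonneg_left (key i j) (norm_nonneg _)
    _ = N a * S := by
        rw [N, Finset.sum_mul]
        exact Finset.sum_congr rfl fun i _ => (Finset.sum_mul _ _ _).symm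

lemma dot_self_eq (x : Fin d → ℂ) :
    star x ⬝ᵥ x = ((∑ i, Complex.normSq (x i) : ℝ) : ℂ) := by
  simp only [dotProduct, Complex.ofReal_sum, Pi.star_apply, Complex.star_def]
  exact Finset.sum_congr rfl fun i _ => by rw [mul_comm, Complex.mul_conj]

lemma smul_psd {a : Mat} (c : ℝ) (hc : 0 ≤ c) (ha : a.PosSemidef) :
    ((c : ℂ) • a).PosSemidef := by
  refine .of_dotProduct_mulVec_nonneg ?_ ?_
  · rw [IsHermitian, conjTranspose_smul, ha.1.eq]
    congr 1
    simp
  · intro x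
    rw [smul_mulVec, dotProduct_smul, smul_eq_mul]
    exact mul_nonneg (Complex.zero_le_real.2 hc) (ha.dotProduct_mulVec_nonneg x)

lemma herm_dot_real {a : Mat} (ha : a.IsHermitian) (x : Fin d → ℂ) :
    (star x ⬝ᵥ a *ᵥ x).im = 0 := by
  have h : star (star x ⬝ᵥ a *ᵥ x) = star x ⬝ᵥ a *ᵥ x := by
    rw [← star_dotProduct (a *ᵥ x) x, star_mulVec, ← dotProduct_mulVec, ha.eq]
  have := congrArg Complex.im h
  simp only [Complex.star_def, Complex.conj_im] at this
  linarith

lemma shift_psd {h : Mat} (hh : h.IsHermitian) {c : ℝ} (hc : N h ≤ c) :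
    (h + (c : ℂ) • 1).PosSemidef := by
  have hc0 : 0 ≤ c := (N_nonneg h).trans hc
  refine .of_dotProduct_mulVec_nonneg ?_ ?_
  · rw [IsHermitian, conjTranspose_add, hh.eq, conjTranspose_smul, conjTranspose_one]
    congr 2
    simp
  · intro x
    rw [add_mulVec, dotProduct_add, smul_mulVec, one_mulVec, dotProduct_smul,
      dot_self_eq, smul_eq_mul]
    set q := star x ⬝ᵥ h *ᵥ x
    set S := ∑ i, Complex.normSq (x i) with hSdef
    have hqim : q.im = 0 := herm_dot_real hh x
    have habs : ‖q‖ ≤ N h * S := abs_dot_le h x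
    have hqre : -(N h * S) ≤ q.re := by
      have := neg_abs_le q.re
      have h2 : |q.re| ≤ ‖q‖ := Complex.abs_re_le_norm q
      linarith
    have hS0 : 0 ≤ S := Finset.sum_nonneg fun i _ => Complex.normSq_nonneg _
    rw [Complex.nonneg_iff]
    constructor
    · simp only [Complex.add_re, Complex.mul_re, Complex.ofReal_re, Complex.ofReal_im]
      have : N h * S ≤ c * S := mul_le_mul_of_nonneg_right hc hS0
      simp only [mul_zero, zero_mul, sub_zero]
      linarith
    · simp [hqim]

lemma shift_psd' {h : Mat} (hh : h.IsHermitian) {c : ℝ} (hc : N h ≤ c) :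
    ((c : ℂ) • 1 - h).PosSemidef := by
  have hn : N (-h) ≤ c := by
    have : N (-h) = N h := by
      simp [N]
    linarith
  have := shift_psd (h := -h) (by rw [IsHermitian, conjTranspose_neg, hh.eq]) hn
  convert this using 1
  abel


/-- the effect obtained by rescaling a PSD matrix -/
noncomputable def effOf (a : Mat) (ha : a.PosSemidef) : QEffect d := by
  refine ⟨((N a + 1 : ℝ) : ℂ)⁻¹ • a, ?_, ?_⟩
  · have : (((N a + 1 : ℝ) : ℂ)⁻¹ • a) = (((N a + 1)⁻¹ : ℝ) : ℂ) • a := by push_cast; rfl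
    rw [this]
    exact smul_psd _ (by have := N_nonneg a; positivity) ha
  · have hpos : (0:ℝ) < N a + 1 := by have := N_nonneg a; linarith
    have key : (1 : Mat) - ((N a + 1 : ℝ) : ℂ)⁻¹ • a
        = (((N a + 1)⁻¹ : ℝ) : ℂ) • (((N a + 1 : ℝ) : ℂ) • 1 - a) := by
      rw [smul_sub, smul_smul]
      push_cast
      rw [inv_mul_cancel₀ (by exact_mod_cast hpos.ne')]
      push_cast
      rw [one_smul]
    rw [key]
    exact smul_psd _ (by have := N_nonneg a; positivity) (shift_psd' ha.1 (by linarith))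

lemma effOf_val (a : Mat) (ha : a.PosSemidef) :
    (effOf a ha).1 = ((N a + 1 : ℝ) : ℂ)⁻¹ • a := rfl

open scoped Classical

/-- extension of the state to all PSD matrices -/
noncomputable def μ (ω : QEffect d → ℝ) (a : Mat) : ℝ :=
  if h : a.PosSemidef then (N a + 1) * ω (effOf a h) else 0

variable {ω : QEffect d → ℝ}

lemma mu_eq (hω : IsQState ω) {a : Mat} (ha : a.PosSemidef) {c : ℝ} (hc : 0 < c)
    (e : QEffect d) (hrep : a = (c : ℂ) • e.1) : μ ω a = c * ω e := by
  obtain ⟨hω1, hω2, hω3, hω4⟩ := hω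
  rw [μ, dif_pos ha]
  set C := N a + 1 with hC
  have hCpos : (0:ℝ) < C := by have := N_nonneg a; simp only [hC]; linarith
  have hCne : C ≠ 0 := hCpos.ne'
  have hcne : c ≠ 0 := hc.ne'
  have hval : (effOf a ha).1 = ((c / C : ℝ) : ℂ) • e.1 := by
    rw [effOf_val, ← hC, hrep, smul_smul]
    congr 1
    push_cast
    field_simp
  rcases le_or_gt (c / C) 1 with hr | hr
  · have h4 := hω4 (c / C) ⟨div_nonneg hc.le hCpos.le, hr⟩ e (effOf a ha) hval
    rw [h4]
    field_simp
  · have hrpos : (0:ℝ) < c / C := div_pos hc hCpos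
    have hinv : e.1 = (((c / C)⁻¹ : ℝ) : ℂ) • (effOf a ha).1 := by
      rw [hval, smul_smul]
      norm_cast
      rw [inv_mul_cancel₀ hrpos.ne', one_smul]
    have h4 := hω4 (c / C)⁻¹ ⟨(inv_pos.2 hrpos).le, by
        rw [inv_le_one_iff₀]; right; linarith⟩ (effOf a ha) e hinv
    rw [h4]
    rw [show (c / C)⁻¹ = C / c by field_simp]
    field_simp

lemma mu_nonneg (hω : IsQState ω) (a : Mat) : 0 ≤ μ ω a := by
  rw [μ]
  split
  · have h1 := (hω.1 (effOf a ‹_›)).1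
    have hN := N_nonneg a
    nlinarith
  · exact le_refl _

def zeroEff : QEffect d := ⟨0, Matrix.PosSemidef.zero, by rw [sub_zero]; exact Matrix.PosSemidef.one⟩

lemma zeroEff_val : (zeroEff (d := d)).1 = (0 : Mat) := rfl

lemma mu_zero (hω : IsQState ω) : μ ω (0 : Mat) = 0 := by
  have h0 : (0 : Mat) = ((1:ℝ) : ℂ) • (zeroEff (d := d)).1 := by
    rw [zeroEff_val, smul_zero]
  rw [mu_eq hω Matrix.PosSemidef.zero one_pos zeroEff h0]
  have := hω.2.2.2 0 ⟨le_refl 0, zero_le_one⟩ zeroEff zeroEff (by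
    rw [zeroEff_val]; simp)
  linarith

def oneEff : QEffect d := ⟨1, Matrix.PosSemidef.one, by rw [sub_self]; exact Matrix.PosSemidef.zero⟩

lemma oneEff_val : (oneEff (d := d)).1 = (1 : Mat) := rfl

lemma mu_one (hω : IsQState ω) : μ ω (1 : Mat) = 1 := by
  have h0 : (1 : Mat) = ((1:ℝ) : ℂ) • (oneEff (d := d)).1 := by
    rw [oneEff_val]; simp
  rw [mu_eq hω Matrix.PosSemidef.one one_pos oneEff h0, hω.2.2.1 oneEff rfl, mul_one]

/-- rescale a PSD matrix by any sufficiently large constant to get an effect -/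
noncomputable def effOf' (m : Mat) (hm : m.PosSemidef) (c : ℝ) (hc : 0 < c) (hNm : N m ≤ c) :
    QEffect d := by
  refine ⟨((c:ℝ):ℂ)⁻¹ • m, ?_, ?_⟩
  · have h : (((c : ℝ) : ℂ)⁻¹ • m) = (((c)⁻¹ : ℝ) : ℂ) • m := by push_cast; rfl
    rw [h]
    exact smul_psd _ (by positivity) hm
  · have key : (1 : Mat) - ((c : ℝ) : ℂ)⁻¹ • m
        = (((c)⁻¹ : ℝ) : ℂ) • (((c : ℝ) : ℂ) • 1 - m) := by
      rw [smul_sub, smul_smul]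
      norm_cast
      rw [inv_mul_cancel₀ hc.ne']
      push_cast
      rw [one_smul]
    rw [key]
    exact smul_psd _ (by positivity) (shift_psd' hm.1 hNm)

lemma effOf'_val (m : Mat) (hm : m.PosSemidef) (c : ℝ) (hc : 0 < c) (hNm : N m ≤ c) :
    (effOf' m hm c hc hNm).1 = ((c:ℝ):ℂ)⁻¹ • m := rfl

lemma smul_effOf' (m : Mat) (hm : m.PosSemidef) (c : ℝ) (hc : 0 < c) (hNm : N m ≤ c) :
    m = ((c:ℝ):ℂ) • (effOf' m hm c hc hNm).1 := by
  rw [effOf'_val, smul_smul, mul_inv_cancel₀ (by exact_mod_cast hc.ne'), one_smul]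

lemma mu_add (hω : IsQState ω) {a b : Mat} (ha : a.PosSemidef) (hb : b.PosSemidef) :
    μ ω (a + b) = μ ω a + μ ω b := by
  have hNa := N_nonneg a
  have hNb := N_nonneg b
  set c := N a + N b + 1 with hc
  have hcpos : (0:ℝ) < c := by simp only [hc]; linarith
  have hNab : N (a + b) ≤ c := by have := N_add_le a b; simp only [hc]; linarith
  have hNa' : N a ≤ c := by simp only [hc]; linarith
  have hNb' : N b ≤ c := by simp only [hc]; linarith
  set ea := effOf' a ha c hcpos hNa'
  set eb := effOf' b hb c hcpos hNb'
  set es := effOf' (a + b) (ha.add hb) c hcpos hNab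
  have hsum : es.1 = ea.1 + eb.1 := by
    simp only [es, ea, eb, effOf'_val]
    rw [smul_add]
  have h2 := hω.2.1 ea eb es hsum
  rw [mu_eq hω (ha.add hb) hcpos es (smul_effOf' _ _ _ _ _),
    mu_eq hω ha hcpos ea (smul_effOf' _ _ _ _ _),
    mu_eq hω hb hcpos eb (smul_effOf' _ _ _ _ _), h2]
  ring

lemma mu_smul (hω : IsQState ω) {a : Mat} (ha : a.PosSemidef) {t : ℝ} (ht : 0 ≤ t) :
    μ ω ((t : ℂ) • a) = t * μ ω a := by
  rcases eq_or_lt_of_le ht with h | h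
  · rw [← h]
    push_cast
    rw [zero_smul, mu_zero hω]
    ring
  · have hC : (0:ℝ) < N a + 1 := by have := N_nonneg a; linarith
    have hrep := smul_effOf' a ha (N a + 1) hC (by linarith)
    have hrep2 : (t : ℂ) • a = ((t * (N a + 1) : ℝ) : ℂ) • (effOf' a ha (N a + 1) hC (by linarith)).1 := by
      rw [show ((t * (N a + 1) : ℝ) : ℂ) = (t:ℂ) * ((N a + 1 : ℝ):ℂ) by push_cast; ring,
        ← smul_smul, ← hrep]
    rw [mu_eq hω (smul_psd t ht ha) (by positivity) _ hrep2,
      mu_eq hω ha hC _ hrep]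
    ring


lemma mu_smul_one (hω : IsQState ω) {c : ℝ} (hc : 0 ≤ c) :
    μ ω ((c : ℂ) • (1 : Mat)) = c := by
  rw [show ((c:ℂ) • (1:Mat)) = (c:ℂ) • (1:Mat) from rfl]
  rw [mu_smul hω Matrix.PosSemidef.one hc, mu_one hω, mul_one]

/-- extension of the state to all Hermitian matrices -/
noncomputable def ν (ω : QEffect d → ℝ) (h : Mat) : ℝ :=
  μ ω (h + ((N h + 1 : ℝ) : ℂ) • 1) - (N h + 1)

lemma nu_eq (hω : IsQState ω) {h : Mat} (hh : h.IsHermitian) {c : ℝ} (hc : 0 ≤ c)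
    (hpsd : (h + (c : ℂ) • 1).PosSemidef) :
    ν ω h = μ ω (h + (c : ℂ) • 1) - c := by
  have hN := N_nonneg h
  have hC : (0:ℝ) ≤ N h + 1 := by linarith
  have hpsd2 : (h + ((N h + 1 : ℝ) : ℂ) • 1).PosSemidef := shift_psd hh (by linarith)
  have e1 : (h + (c:ℂ) • 1) + ((N h + 1 : ℝ):ℂ) • 1
      = (h + ((N h + 1 : ℝ):ℂ) • 1) + (c:ℂ) • 1 := by abel
  have h1 : μ ω ((h + (c:ℂ) • 1) + ((N h + 1 : ℝ):ℂ) • 1)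
      = μ ω (h + (c:ℂ) • 1) + (N h + 1) := by
    rw [mu_add hω hpsd (smul_psd _ hC Matrix.PosSemidef.one), mu_smul_one hω hC]
  have h2 : μ ω ((h + ((N h + 1 : ℝ):ℂ) • 1) + (c:ℂ) • 1)
      = μ ω (h + ((N h + 1 : ℝ):ℂ) • 1) + c := by
    rw [mu_add hω hpsd2 (smul_psd _ hc Matrix.PosSemidef.one), mu_smul_one hω hc]
  rw [ν]
  rw [e1] at h1
  rw [h1] at h2
  linarith

lemma nu_psd (hω : IsQState ω) {a : Mat} (ha : a.PosSemidef) : ν ω a = μ ω a := by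
  have := nu_eq hω ha.1 (le_refl (0:ℝ)) (by
    rw [Complex.ofReal_zero, zero_smul, add_zero]; exact ha)
  rw [this, Complex.ofReal_zero, zero_smul, add_zero, sub_zero]

lemma nu_zero (hω : IsQState ω) : ν ω (0 : Mat) = 0 := by
  rw [nu_psd hω Matrix.PosSemidef.zero, mu_zero hω]

lemma nu_add (hω : IsQState ω) {g h : Mat} (hg : g.IsHermitian) (hh : h.IsHermitian) :
    ν ω (g + h) = ν ω g + ν ω h := by
  set Cg := N g + 1 with hCg
  set Ch := N h + 1 with hCh
  have hNg := N_nonneg g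
  have hNh := N_nonneg h
  have hCg0 : (0:ℝ) ≤ Cg := by simp only [hCg]; linarith
  have hCh0 : (0:ℝ) ≤ Ch := by simp only [hCh]; linarith
  have hpg : (g + (Cg:ℂ) • 1).PosSemidef := shift_psd hg (by simp only [hCg]; linarith)
  have hph : (h + (Ch:ℂ) • 1).PosSemidef := shift_psd hh (by simp only [hCh]; linarith)
  have hsum : (g + h) + ((Cg + Ch : ℝ):ℂ) • 1 = (g + (Cg:ℂ) • 1) + (h + (Ch:ℂ) • 1) := by
    push_cast
    rw [add_smul]
    abel
  have hpsum : ((g + h) + ((Cg + Ch : ℝ):ℂ) • 1).PosSemidef := by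
    rw [hsum]; exact hpg.add hph
  rw [nu_eq hω (hg.add hh) (by linarith) hpsum, hsum, mu_add hω hpg hph,
    nu_eq hω hg hCg0 hpg, nu_eq hω hh hCh0 hph]
  ring

lemma nu_smul_nonneg (hω : IsQState ω) {h : Mat} (hh : h.IsHermitian) {t : ℝ} (ht : 0 ≤ t) :
    ν ω ((t:ℂ) • h) = t * ν ω h := by
  set C := N h + 1 with hC
  have hN := N_nonneg h
  have hC0 : (0:ℝ) ≤ C := by simp only [hC]; linarith
  have hps : (h + (C:ℂ) • 1).PosSemidef := shift_psd hh (by simp only [hC]; linarith)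
  have hherm : ((t:ℂ) • h).IsHermitian := by
    rw [IsHermitian, conjTranspose_smul, hh.eq]
    congr 1
    simp
  have hrw : (t:ℂ) • h + ((t * C : ℝ):ℂ) • 1 = (t:ℂ) • (h + (C:ℂ) • 1) := by
    rw [smul_add, smul_smul]
    push_cast
    ring_nf
  have hpsd : ((t:ℂ) • h + ((t * C : ℝ):ℂ) • 1).PosSemidef := by
    rw [hrw]; exact smul_psd t ht hps
  rw [nu_eq hω hherm (by positivity) hpsd, hrw, mu_smul hω hps ht,
    nu_eq hω hh hC0 hps]
  ring

lemma nu_neg (hω : IsQState ω) {h : Mat} (hh : h.IsHermitian) :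
    ν ω (-h) = - ν ω h := by
  have hnh : (-h).IsHermitian := by rw [IsHermitian, conjTranspose_neg, hh.eq]
  have := nu_add hω hh hnh
  rw [add_neg_cancel, nu_zero hω] at this
  linarith

lemma nu_smul (hω : IsQState ω) {h : Mat} (hh : h.IsHermitian) (t : ℝ) :
    ν ω ((t:ℂ) • h) = t * ν ω h := by
  rcases le_or_gt 0 t with ht | ht
  · exact nu_smul_nonneg hω hh ht
  · have h1 : (t:ℂ) • h = -(((-t : ℝ):ℂ) • h) := by push_cast; rw [neg_smul, neg_neg]
    have hherm : (((-t : ℝ):ℂ) • h).IsHermitian := by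
      rw [IsHermitian, conjTranspose_smul, hh.eq]
      congr 1
      simp
    rw [h1, nu_neg hω hherm, nu_smul_nonneg hω hh (by linarith)]
    ring

lemma mu_nonneg' (hω : IsQState ω) {a : Mat} (ha : a.PosSemidef) : 0 ≤ ν ω a := by
  rw [nu_psd hω ha]
  exact mu_nonneg hω a

lemma nu_effect (hω : IsQState ω) (e : QEffect d) : ν ω e.1 = ω e := by
  rw [nu_psd hω e.2.1, mu_eq hω e.2.1 one_pos e (by rw [Complex.ofReal_one, one_smul])]
  ring


/-- Hermitian (real) part -/
noncomputable def reM (a : Mat) : Mat := (1/2 : ℂ) • (a + aᴴ)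

/-- anti-Hermitian (imaginary) part -/
noncomputable def imM (a : Mat) : Mat := (Complex.I/2) • (aᴴ - a)

lemma reM_herm (a : Mat) : (reM a).IsHermitian := by
  rw [IsHermitian, reM, conjTranspose_smul, conjTranspose_add, conjTranspose_conjTranspose]
  rw [show star (1/2 : ℂ) = (1/2 : ℂ) by simp]
  rw [add_comm]

lemma imM_herm (a : Mat) : (imM a).IsHermitian := by
  rw [IsHermitian, imM, conjTranspose_smul, conjTranspose_sub, conjTranspose_conjTranspose]
  rw [show star (Complex.I/2 : ℂ) = -(Complex.I/2 : ℂ) by simp [Complex.ext_iff]; norm_num]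
  rw [neg_smul, ← smul_neg, neg_sub]

lemma reM_add (a b : Mat) : reM (a + b) = reM a + reM b := by
  rw [reM, reM, reM, conjTranspose_add, ← smul_add]
  congr 1
  abel

lemma imM_add (a b : Mat) : imM (a + b) = imM a + imM b := by
  rw [imM, imM, imM, conjTranspose_add, ← smul_add]
  congr 1
  abel

lemma reM_herm_eq {a : Mat} (ha : a.IsHermitian) : reM a = a := by
  rw [reM, ha.eq]
  rw [show a + a = (2:ℂ) • a by rw [two_smul]]
  rw [smul_smul]
  norm_num

lemma imM_herm_eq {a : Mat} (ha : a.IsHermitian) : imM a = 0 := by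
  rw [imM, ha.eq, sub_self, smul_zero]

lemma reM_conjTranspose (a : Mat) : reM aᴴ = reM a := by
  rw [reM, reM, conjTranspose_conjTranspose, add_comm]

lemma imM_conjTranspose (a : Mat) : imM aᴴ = -imM a := by
  rw [imM, imM, conjTranspose_conjTranspose, ← smul_neg, neg_sub]

lemma reM_decomp (a : Mat) : a = reM a + Complex.I • imM a := by
  rw [reM, imM]
  match_scalars <;> simp [Complex.ext_iff] <;> norm_num

/-- the complex-linear extension of the state -/
noncomputable def φ (ω : QEffect d → ℝ) (a : Mat) : ℂ :=
  (ν ω (reM a) : ℂ) + Complex.I * (ν ω (imM a) : ℂ)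

lemma phi_add (hω : IsQState ω) (a b : Mat) : φ ω (a + b) = φ ω a + φ ω b := by
  rw [φ, φ, φ, reM_add, imM_add, nu_add hω (reM_herm a) (reM_herm b),
    nu_add hω (imM_herm a) (imM_herm b)]
  push_cast
  ring

lemma phi_herm (hω : IsQState ω) {a : Mat} (ha : a.IsHermitian) :
    φ ω a = (ν ω a : ℂ) := by
  rw [φ, reM_herm_eq ha, imM_herm_eq ha, nu_zero hω]
  simp

lemma phi_smul (hω : IsQState ω) (c : ℂ) (a : Mat) : φ ω (c • a) = c * φ ω a := by
  have hre : reM (c • a) = ((c.re : ℝ):ℂ) • reM a + ((-c.im : ℝ):ℂ) • imM a := by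
    rw [reM, reM, imM, conjTranspose_smul]
    match_scalars <;> simp [Complex.ext_iff, Complex.star_def] <;> constructor <;> first | trivial | ring
  have him : imM (c • a) = ((c.re : ℝ):ℂ) • imM a + ((c.im : ℝ):ℂ) • reM a := by
    rw [imM, imM, reM, conjTranspose_smul]
    match_scalars <;> simp [Complex.ext_iff, Complex.star_def] <;> constructor <;> first | trivial | ring
  have h1 : ν ω (reM (c • a)) = c.re * ν ω (reM a) + (-c.im) * ν ω (imM a) := by
    rw [hre]
    have hsm1 : (((c.re : ℝ):ℂ) • reM a).IsHermitian := by
      rw [IsHermitian, conjTranspose_smul, (reM_herm a).eq]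
      congr 1
      simp
    have hsm2 : (((-c.im : ℝ):ℂ) • imM a).IsHermitian := by
      rw [IsHermitian, conjTranspose_smul, (imM_herm a).eq]
      congr 1
      simp
    rw [nu_add hω hsm1 hsm2, nu_smul hω (reM_herm a), nu_smul hω (imM_herm a)]
  have h2 : ν ω (imM (c • a)) = c.re * ν ω (imM a) + c.im * ν ω (reM a) := by
    rw [him]
    have hsm1 : (((c.re : ℝ):ℂ) • imM a).IsHermitian := by
      rw [IsHermitian, conjTranspose_smul, (imM_herm a).eq]
      congr 1
      simp
    have hsm2 : (((c.im : ℝ):ℂ) • reM a).IsHermitian := by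
      rw [IsHermitian, conjTranspose_smul, (reM_herm a).eq]
      congr 1
      simp
    rw [nu_add hω hsm1 hsm2, nu_smul hω (imM_herm a), nu_smul hω (reM_herm a)]
  rw [φ, φ, h1, h2]
  push_cast
  apply Complex.ext <;> simp <;> ring

lemma phi_conjTranspose (hω : IsQState ω) (a : Mat) :
    φ ω aᴴ = star (φ ω a) := by
  rw [φ, φ, reM_conjTranspose, imM_conjTranspose, nu_neg hω (imM_herm a)]
  simp [Complex.ext_iff]

/-- φ as a ℂ-linear map -/
noncomputable def φL (ω : QEffect d → ℝ) (hω : IsQState ω) : Mat →ₗ[ℂ] ℂ where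
  toFun := φ ω
  map_add' := phi_add hω
  map_smul' := fun c a => by simpa using phi_smul hω c a


lemma std_conjTranspose (i j : Fin d) :
    (single i j (1:ℂ))ᴴ = single j i (1:ℂ) := by
  rw [conjTranspose_single, star_one]

lemma trace_mul_std (A : Mat) (i j : Fin d) :
    (A * single i j 1).trace = A j i := by
  rw [Matrix.trace]
  simp only [Matrix.diag_apply]
  rw [Finset.sum_eq_single j]
  · rw [Matrix.mul_single_apply_same, mul_one]
  · intro b _ hb
    exact Matrix.mul_single_apply_of_ne (c := (1:ℂ)) i j b b hb A
  · intro h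
    exact absurd (Finset.mem_univ j) h

/-- the density matrix built from φ -/
noncomputable def ρM (ω : QEffect d → ℝ) : Mat :=
  Matrix.of fun j i => φ ω (single i j 1)

lemma trace_rho (hω : IsQState ω) (m : Mat) :
    (ρM ω * m).trace = φ ω m := by
  have hm : m = ∑ i : Fin d, ∑ j : Fin d, m i j • single i j (1:ℂ) := by
    conv_lhs => rw [matrix_eq_sum_single m]
    refine Finset.sum_congr rfl fun i _ => Finset.sum_congr rfl fun j _ => ?_
    rw [smul_single, smul_eq_mul, mul_one]
  conv_rhs => rw [hm]
  rw [show φ ω = φL ω hω from rfl, map_sum]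
  have hLHS : (ρM ω * m).trace = ∑ j : Fin d, ∑ i : Fin d, ρM ω j i * m i j := by
    rw [Matrix.trace]
    simp [Matrix.diag, Matrix.mul_apply]
  rw [hLHS, Finset.sum_comm]
  refine Finset.sum_congr rfl fun i _ => ?_
  rw [map_sum]
  refine Finset.sum_congr rfl fun j _ => ?_
  rw [_root_.map_smul, smul_eq_mul, mul_comm]
  rfl

lemma vecMulVec_psd (x : Fin d → ℂ) : (vecMulVec x (star x)).PosSemidef := by
  refine .of_dotProduct_mulVec_nonneg ?_ ?_
  · rw [IsHermitian]
    ext i j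
    simp [vecMulVec, conjTranspose_apply, mul_comm]
  · intro y
    have : star y ⬝ᵥ (vecMulVec x (star x) *ᵥ y) = star y ⬝ᵥ x * (star x ⬝ᵥ y) := by
      simp [vecMulVec, mulVec, dotProduct, Finset.mul_sum, Finset.sum_mul]
      rw [Finset.sum_comm]
      refine Finset.sum_congr rfl fun i _ => Finset.sum_congr rfl fun j _ => by ring
    rw [this]
    have hsy : star y ⬝ᵥ x = star (star x ⬝ᵥ y) := by
      simp [dotProduct, Finset.sum_mul, mul_comm]
    rw [hsy]
    set z := star x ⬝ᵥ y
    rw [Complex.star_def, mul_comm, Complex.mul_conj]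
    exact Complex.zero_le_real.2 (Complex.normSq_nonneg z)

lemma dot_eq_trace (A : Mat) (x : Fin d → ℂ) :
    star x ⬝ᵥ A *ᵥ x = (A * vecMulVec x (star x)).trace := by
  rw [Matrix.trace]
  simp only [Matrix.diag, Matrix.mul_apply, vecMulVec, dotProduct, mulVec,
    Pi.star_apply, Matrix.of_apply]
  refine Finset.sum_congr rfl fun i _ => ?_
  rw [Finset.mul_sum]
  refine Finset.sum_congr rfl fun j _ => by ring

lemma rho_herm (hω : IsQState ω) : (ρM ω).IsHermitian := by
  rw [IsHermitian]
  ext i j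
  show star (φ ω (single i j 1)) = φ ω (single j i 1)
  rw [← phi_conjTranspose hω, std_conjTranspose]

lemma rho_psd (hω : IsQState ω) : (ρM ω).PosSemidef := by
  refine .of_dotProduct_mulVec_nonneg (rho_herm hω) fun x => ?_
  rw [dot_eq_trace, trace_rho hω, phi_herm hω (vecMulVec_psd x).1]
  exact Complex.zero_le_real.2 (mu_nonneg' hω (vecMulVec_psd x))

lemma rho_trace (hω : IsQState ω) : (ρM ω).trace = 1 := by
  rw [show (ρM ω).trace = (ρM ω * 1).trace by rw [mul_one], trace_rho hω,
    phi_herm hω isHermitian_one, nu_psd hω Matrix.PosSemidef.one, mu_one hω]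
  norm_num

lemma rho_trace_effect (hω : IsQState ω) (e : QEffect d) :
    ((ω e : ℝ) : ℂ) = (ρM ω * e.1).trace := by
  rw [trace_rho hω, phi_herm hω e.2.1.1, nu_effect hω]


lemma eq_rho_of_eq_on_effects (hω : IsQState ω) (ρ' : Mat)
    (heff : ∀ e : QEffect d, (ρ' * e.1).trace = (ρM ω * e.1).trace) :
    ρ' = ρM ω := by
  set σ := ρ' - ρM ω with hσ
  have hzero : ∀ e : QEffect d, (σ * e.1).trace = 0 := fun e => by
    rw [hσ, sub_mul, trace_sub, heff e, sub_self]
  have hpsd : ∀ a : Mat, a.PosSemidef → (σ * a).trace = 0 := by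
    intro a ha
    have hN := N_nonneg a
    have hc : (0:ℝ) < N a + 1 := by linarith
    have hrep := smul_effOf' a ha (N a + 1) hc (by linarith)
    set e := effOf' a ha (N a + 1) hc (by linarith)
    calc (σ * a).trace = (σ * (((N a + 1 : ℝ):ℂ) • e.1)).trace := by rw [← hrep]
      _ = ((N a + 1 : ℝ):ℂ) * (σ * e.1).trace := by
          rw [Matrix.mul_smul, trace_smul, smul_eq_mul]
      _ = 0 := by rw [hzero e, mul_zero]
  have htr0 : σ.trace = 0 := by
    have h1 := hpsd 1 Matrix.PosSemidef.one
    rwa [mul_one] at h1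
  have hherm : ∀ h : Mat, h.IsHermitian → (σ * h).trace = 0 := by
    intro h hh
    have hN := N_nonneg h
    have hps : (h + ((N h + 1 : ℝ):ℂ) • 1).PosSemidef := shift_psd hh (by linarith)
    have h1 := hpsd _ hps
    rw [mul_add, trace_add, Matrix.mul_smul, trace_smul, mul_one, smul_eq_mul, htr0,
      mul_zero, add_zero] at h1
    exact h1
  have hall : ∀ m : Mat, (σ * m).trace = 0 := by
    intro m
    have hd := reM_decomp m
    calc (σ * m).trace = (σ * (reM m + Complex.I • imM m)).trace := by rw [← hd]
      _ = (σ * reM m).trace + Complex.I * (σ * imM m).trace := by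
          rw [mul_add, trace_add, Matrix.mul_smul, trace_smul, smul_eq_mul]
      _ = 0 := by rw [hherm _ (reM_herm m), hherm _ (imM_herm m), mul_zero, add_zero]
  have hσ0 : σ = 0 := by
    ext i j
    have h1 := hall (single j i 1)
    rw [trace_mul_std] at h1
    simpa using h1
  have h2 : ρ' - ρM ω = 0 := by rw [← hσ]; exact hσ0
  exact sub_eq_zero.mp h2

end Busch

/-- Gleason-type theorem for POVMs (Busch / Caves–Fuchs–Mannes–Renes): every
state on the effect algebra of a finite-dimensional complex Hilbert space is
`e ↦ tr (ρ e)` for a unique density operator `ρ`. -/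
theorem qstate_eq_trace_density (d : ℕ) (ω : QEffect d → ℝ) (hω : IsQState ω) :
    ∃! ρ : Matrix (Fin d) (Fin d) ℂ, ρ.PosSemidef ∧ ρ.trace = 1 ∧
      ∀ e : QEffect d, (ω e : ℂ) = (ρ * e.1).trace := by
  refine ⟨Busch.ρM ω, ⟨Busch.rho_psd hω, Busch.rho_trace hω,
    fun e => Busch.rho_trace_effect hω e⟩, ?_⟩
  rintro ρ' ⟨hpsd', htr', hform'⟩
  exact Busch.eq_rho_of_eq_on_effects hω ρ' fun e => by
    rw [← hform' e, Busch.rho_trace_effect hω e]
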